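/- Every 2-intersecting 5-uniform hypergraph with at most 10 edges has covering number at most 3. -/

import Mathlib

/-- A set of vertices `C` covers the hypergraph with edge set `E` if every edge
contains a vertex of `C`. -/
def IsCover {V : Type*} (E : Finset (Finset V)) (C : Finset V) : Prop :=
  ∀ e ∈ E, ∃ v ∈ e, v ∈ C

/-- The covering number: the minimum size of a cover. -/
noncomputable def coverNumber {V : Type*} (E : Finset (Finset V)) : ℕ :=
  sInf {n : ℕ | ∃ C : Finset V, C.card = n ∧ IsCover E C}

/-- The degree of a vertex: the number of edges containing it. -/
def degree {V : Type*} [DecidableEq V] (E : Finset (Finset V)) (v : V) : ℕ :=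
  (E.filter (fun e => v ∈ e)).card

lemma degsum {V : Type*} [DecidableEq V] (E : Finset (Finset V)) (e0 : Finset V) :
    ∑ v ∈ e0, degree E v = ∑ f ∈ E, (e0 ∩ f).card := by
  have h1 : ∀ v, degree E v = ∑ f ∈ E, if v ∈ f then 1 else 0 := fun v => by
    rw [degree, Finset.card_filter]
  have h2 : ∀ f, (e0 ∩ f).card = ∑ v ∈ e0, if v ∈ f then 1 else 0 := fun f => by
    rw [← Finset.filter_mem_eq_inter, Finset.card_filter]
  simp_rw [h1, h2]
  exact Finset.sum_comm

lemma maxdeg {V : Type*} [DecidableEq V] (E : Finset (Finset V))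
    (hunif : ∀ e ∈ E, e.card = 5)
    (hint2 : ∀ e ∈ E, ∀ f ∈ E, e ≠ f → 2 ≤ (e ∩ f).card)
    (hne : E.Nonempty) :
    ∃ v, 2 * E.card + 3 ≤ 5 * degree E v := by
  obtain ⟨e0, he0⟩ := hne
  have hsum : 2 * E.card + 3 ≤ ∑ v ∈ e0, degree E v := by
    rw [degsum]
    have h5 : (e0 ∩ e0).card = 5 := by rw [Finset.inter_self]; exact hunif e0 he0
    have hrest : 2 * (E.erase e0).card ≤ ∑ f ∈ E.erase e0, (e0 ∩ f).card := by
      calc 2 * (E.erase e0).card = ∑ _f ∈ E.erase e0, 2 := by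
            rw [Finset.sum_const, smul_eq_mul, mul_comm]
        _ ≤ ∑ f ∈ E.erase e0, (e0 ∩ f).card := by
            apply Finset.sum_le_sum
            intro f hf
            exact hint2 e0 he0 f (Finset.mem_of_mem_erase hf)
              (Ne.symm (Finset.ne_of_mem_erase hf))
    have hsplit : ∑ f ∈ E, (e0 ∩ f).card
        = (e0 ∩ e0).card + ∑ f ∈ E.erase e0, (e0 ∩ f).card :=
      (Finset.add_sum_erase E _ he0).symm
    have hcard : (E.erase e0).card = E.card - 1 := Finset.card_erase_of_mem he0
    have hpos : 1 ≤ E.card := Finset.card_pos.mpr ⟨e0, he0⟩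
    omega
  -- pigeonhole on e0 (|e0| = 5)
  obtain ⟨v, hv, hmax⟩ := Finset.exists_max_image e0 (degree E)
    (Finset.card_pos.mp (by rw [hunif e0 he0]; norm_num))
  refine ⟨v, le_trans hsum ?_⟩
  calc ∑ w ∈ e0, degree E w ≤ ∑ _w ∈ e0, degree E v :=
        Finset.sum_le_sum (fun w hw => hmax w hw)
    _ = 5 * degree E v := by
        rw [Finset.sum_const, smul_eq_mul, hunif e0 he0]

theorem stmt18 {V : Type*} [DecidableEq V] (E : Finset (Finset V))
    (hunif : ∀ e ∈ E, e.card = 5)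
    (hint2 : ∀ e ∈ E, ∀ f ∈ E, e ≠ f → 2 ≤ (e ∩ f).card)
    (hcard : E.card ≤ 10) :
    coverNumber E ≤ 3 := by
  -- it suffices to find a cover of size ≤ 3
  suffices h : ∃ C : Finset V, C.card ≤ 3 ∧ IsCover E C by
    obtain ⟨C, hC3, hCcov⟩ := h
    exact le_trans (Nat.sInf_le ⟨C, rfl, hCcov⟩) hC3
  by_cases hE : E.Nonempty
  · obtain ⟨v1, hv1⟩ := maxdeg E hunif hint2 hE
    set E1 := E.filter (fun e => ¬ v1 ∈ e) with hE1def
    have hsub1 : E1 ⊆ E := Finset.filter_subset _ _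
    have hpart1 : degree E v1 + E1.card = E.card :=
      Finset.card_filter_add_card_filter_not (p := fun e => v1 ∈ e)
    have hc1 : E1.card ≤ 5 := by omega
    by_cases hE1 : E1.Nonempty
    · obtain ⟨v2, hv2⟩ := maxdeg E1 (fun e he => hunif e (hsub1 he))
        (fun e he f hf => hint2 e (hsub1 he) f (hsub1 hf)) hE1
      set E2 := E1.filter (fun e => ¬ v2 ∈ e) with hE2def
      have hsub2 : E2 ⊆ E1 := Finset.filter_subset _ _
      have hpart2 : degree E1 v2 + E2.card = E1.card :=
        Finset.card_filter_add_card_filter_not (p := fun e => v2 ∈ e)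
      have hc2 : E2.card ≤ 2 := by omega
      by_cases hE2 : E2.Nonempty
      · -- find v3 covering all of E2
        have hv3 : ∃ v3, ∀ e ∈ E2, v3 ∈ e := by
          rcases Nat.lt_or_ge E2.card 2 with h2 | h2
          · have h1 : E2.card = 1 := by
              have := Finset.card_pos.mpr hE2; omega
            obtain ⟨e, he⟩ := Finset.card_eq_one.mp h1
            have hee : e ∈ E := hsub1 (hsub2 (by simp [he]))
            obtain ⟨v3, hv3⟩ := Finset.card_pos.mp
              (by rw [hunif e hee]; norm_num : 0 < e.card)
            exact ⟨v3, fun f hf => by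
              rw [he, Finset.mem_singleton] at hf; exact hf ▸ hv3⟩
          · have h2' : E2.card = 2 := le_antisymm hc2 h2
            obtain ⟨e, f, hef, hE2eq⟩ := Finset.card_eq_two.mp h2'
            have heE : e ∈ E := hsub1 (hsub2 (by simp [hE2eq]))
            have hfE : f ∈ E := hsub1 (hsub2 (by simp [hE2eq]))
            have hint : 0 < (e ∩ f).card :=
              lt_of_lt_of_le (by norm_num) (hint2 e heE f hfE hef)
            obtain ⟨v3, hv3⟩ := Finset.card_pos.mp hint
            rw [Finset.mem_inter] at hv3
            refine ⟨v3, fun g hg => ?_⟩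
            rw [hE2eq, Finset.mem_insert, Finset.mem_singleton] at hg
            rcases hg with rfl | rfl
            · exact hv3.1
            · exact hv3.2
        obtain ⟨v3, hv3⟩ := hv3
        refine ⟨{v1, v2, v3}, ?_, ?_⟩
        · exact le_trans (Finset.card_insert_le _ _)
            (by have := Finset.card_insert_le v2 {v3}; rw [Finset.card_singleton] at this; omega)
        · intro e he
          by_cases h1 : v1 ∈ e
          · exact ⟨v1, h1, by simp⟩
          · have he1 : e ∈ E1 := Finset.mem_filter.mpr ⟨he, h1⟩
            by_cases h2 : v2 ∈ e
            · exact ⟨v2, h2, by simp⟩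
            · have he2 : e ∈ E2 := Finset.mem_filter.mpr ⟨he1, h2⟩
              exact ⟨v3, hv3 e he2, by simp⟩
      · -- E2 empty: {v1, v2} covers
        refine ⟨{v1, v2}, le_trans (Finset.card_insert_le _ _) (by simp), ?_⟩
        intro e he
        by_cases h1 : v1 ∈ e
        · exact ⟨v1, h1, by simp⟩
        · have he1 : e ∈ E1 := Finset.mem_filter.mpr ⟨he, h1⟩
          by_cases h2 : v2 ∈ e
          · exact ⟨v2, h2, by simp⟩
          · exact absurd (Finset.mem_filter.mpr ⟨he1, h2⟩)
              (fun h => hE2 ⟨e, h⟩)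
    · -- E1 empty: {v1} covers
      refine ⟨{v1}, by simp, ?_⟩
      intro e he
      by_cases h1 : v1 ∈ e
      · exact ⟨v1, h1, by simp⟩
      · exact absurd (Finset.mem_filter.mpr ⟨he, h1⟩) (fun h => hE1 ⟨e, h⟩)
  · refine ⟨∅, by simp, fun e he => ?_⟩
    exact absurd ⟨e, he⟩ hE
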